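/- Let A be a discrete valuation ring with valuation v and uniformizer x, and let m ∈ A[T] with t₀ ∈ A satisfying v(m(t₀)) > 0 and v(m'(t₀)) = 0. Then v(m(t₀)) = 1 or v(m(t₀ + x)) = 1. -/

import Mathlib

open IsDiscreteValuationRing Polynomial

/-- If `A` is a DVR with valuation `v` and uniformizer `x`, `m ∈ A[T]` and `t₀ ∈ A` satisfy
`v(m(t₀)) > 0` and `v(m'(t₀)) = 0`, then `v(m(t₀)) = 1` or `v(m(t₀ + x)) = 1`. -/
theorem stmt_4 {A : Type*} [CommRing A] [IsDomain A] [IsDiscreteValuationRing A]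
    (x : A) (hx : Irreducible x) (m : Polynomial A) (t₀ : A)
    (h1 : 0 < addVal A (m.eval t₀)) (h2 : addVal A (m.derivative.eval t₀) = 0) :
    addVal A (m.eval t₀) = 1 ∨ addVal A (m.eval (t₀ + x)) = 1 := by
  by_cases h : addVal A (m.eval t₀) = 1
  · exact Or.inl h
  right
  have h1' : 1 < addVal A (m.eval t₀) := by
    have hle : 1 ≤ addVal A (m.eval t₀) := by
      simpa using Order.add_one_le_of_lt h1
    exact lt_of_le_of_ne hle (Ne.symm h)
  obtain ⟨k, hk⟩ := m.binomExpansion t₀ x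
  have heq : m.eval (t₀ + x) = m.derivative.eval t₀ * x + (m.eval t₀ + k * x ^ 2) := by
    rw [hk]; ring
  have hva : addVal A (m.derivative.eval t₀ * x) = 1 := by
    rw [addVal_mul, h2, addVal_uniformizer hx, zero_add]
  have hvk : 1 < addVal A (k * x ^ 2) := by
    rw [addVal_mul, hx.addVal_pow]
    calc (1 : ℕ∞) < 2 := by norm_num
      _ ≤ addVal A k + 2 := le_add_self
  have hvb : 1 < addVal A (m.eval t₀ + k * x ^ 2) := (addVal A).map_lt_add h1' hvk
  have hneg1 : addVal A (-1 : A) = 0 := by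
    have := addVal_def' (-1 : Aˣ) hx 0
    simpa using this
  have hvnb : 1 < addVal A (-(m.eval t₀ + k * x ^ 2)) := by
    rw [show -(m.eval t₀ + k * x ^ 2) = (-1) * (m.eval t₀ + k * x ^ 2) by ring,
      addVal_mul, hneg1, zero_add]
    exact hvb
  rw [heq]
  refine le_antisymm ?_ ?_
  · by_contra hle
    push_neg at hle
    have h' : (1 : ℕ∞) < addVal A (m.derivative.eval t₀ * x) := by
      have := (addVal A).map_lt_add hle hvnb
      rw [show m.derivative.eval t₀ * x + (m.eval t₀ + k * x ^ 2) +
        -(m.eval t₀ + k * x ^ 2) = m.derivative.eval t₀ * x by ring] at this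
      exact this
    rw [hva] at h'
    exact lt_irrefl _ h'
  · calc (1 : ℕ∞) = min (addVal A (m.derivative.eval t₀ * x))
          (addVal A (m.eval t₀ + k * x ^ 2)) := by rw [hva, min_eq_left hvb.le]
      _ ≤ _ := addVal_add
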